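/- arXiv:1704.01863 — 3 statements merged into one kernel-verified Lean document; each statement's English description precedes it below -/
import Mathlib

section
/- Let N and R be normal subgroups of a group G, let n : G → G/N and r : G → G/R be the quotient homomorphisms, and let x : G/N → G/(N ⊔ R) and y : G/R → G/(N ⊔ R) be the canonical homomorphisms induced by the inclusions N ≤ N ⊔ R and R ≤ N ⊔ R. Then for all a ∈ G/N and b ∈ G/R with x(a) = y(b), there exists e ∈ G such that n(e) = a and r(e) = b. -/
open scoped Pointwise

theorem stmt_1 {G : Type*} [Group G] (N R : Subgroup G) [N.Normal] [R.Normal]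
    (n : G →* G ⧸ N) (r : G →* G ⧸ R)
    (x : G ⧸ N →* G ⧸ (N ⊔ R)) (y : G ⧸ R →* G ⧸ (N ⊔ R))
    (hn : n = QuotientGroup.mk' N) (hr : r = QuotientGroup.mk' R)
    (hx : x = QuotientGroup.map N (N ⊔ R) (MonoidHom.id G) (fun g hg => Subgroup.mem_sup_left hg))
    (hy : y = QuotientGroup.map R (N ⊔ R) (MonoidHom.id G) (fun g hg => Subgroup.mem_sup_right hg))
    (a : G ⧸ N) (b : G ⧸ R) (hab : x a = y b) :
    ∃ e : G, n e = a ∧ r e = b := by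
  subst hn hr hx hy
  obtain ⟨g, rfl⟩ := QuotientGroup.mk'_surjective N a
  obtain ⟨h, rfl⟩ := QuotientGroup.mk'_surjective R b
  have hmem : g⁻¹ * h ∈ ((N : Set G) * (R : Set G)) := by
    rw [← Subgroup.mul_normal]
    have := hab
    simp only [QuotientGroup.map_mk' , MonoidHom.id_apply, QuotientGroup.mk'_apply] at this
    exact (QuotientGroup.eq).mp this
  obtain ⟨n₀, hn₀, r₀, hr₀, hnr⟩ := hmem
  have hnr' : n₀ * r₀ = g⁻¹ * h := hnr
  replace hn₀ : n₀ ∈ N := hn₀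
  replace hr₀ : r₀ ∈ R := hr₀
  refine ⟨g * n₀, ?_, ?_⟩
  · simp [QuotientGroup.eq, hn₀]
  · have : g * n₀ = h * r₀⁻¹ := by
      have : g * (n₀ * r₀) = h := by rw [hnr']; group
      rw [← this]; group
    rw [this]
    simp [QuotientGroup.eq]
    exact hr₀
end

section
/- (Butterfly Lemma) Let S, S', T, T' be subgroups of a group G with S' ≤ S, S' normal in S, T' ≤ T, and T' normal in T. Then S' ⊔ (S ⊓ T') is normal in S' ⊔ (S ⊓ T), and (S' ⊓ T) ⊔ T' is normal in (S ⊓ T) ⊔ T', and there is an isomorphism of groups (S' ⊔ (S ⊓ T))/(S' ⊔ (S ⊓ T')) ≅ ((S ⊓ T) ⊔ T')/((S' ⊓ T) ⊔ T'). -/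
section Butterfly

variable {G : Type*} [Group G]

/-- Decomposition of elements of `S' ⊔ T` as products, when `T` normalizes `S'`. -/
theorem bfly_decomp (S' T : Subgroup G)
    (hnorm : ∀ s t : G, s ∈ S' → t ∈ T → t * s * t⁻¹ ∈ S') :
    ∀ x ∈ S' ⊔ T, ∃ s ∈ S', ∃ t ∈ T, x = s * t := by
  intro x hx
  rw [Subgroup.sup_eq_closure] at hx
  refine Subgroup.closure_induction ?_ ?_ ?_ ?_ hx
  · rintro y (hy | hy)
    · exact ⟨y, hy, 1, one_mem _, (mul_one y).symm⟩
    · exact ⟨1, one_mem _, y, hy, (one_mul y).symm⟩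
  · exact ⟨1, one_mem _, 1, one_mem _, (one_mul 1).symm⟩
  · rintro x y _ _ ⟨s1, hs1, t1, ht1, rfl⟩ ⟨s2, hs2, t2, ht2, rfl⟩
    refine ⟨s1 * (t1 * s2 * t1⁻¹), mul_mem hs1 (hnorm s2 t1 hs2 ht1),
      t1 * t2, mul_mem ht1 ht2, by group⟩
  · rintro x _ ⟨s, hs, t, ht, rfl⟩
    refine ⟨t⁻¹ * s⁻¹ * t, ?_, t⁻¹, inv_mem ht, by group⟩
    have := hnorm s⁻¹ t⁻¹ (inv_mem hs) (inv_mem ht)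
    simpa using this

/-- Key lemma of the butterfly: `T ≤ S`, `S'` normal in `S`, `T'` normal in `T`.
Then `S' ⊔ T'` is normal in `S' ⊔ T`, `(S' ⊓ T) ⊔ T'` is normal in `T`, and the
quotients agree. -/
theorem bfly (S' T T' S U V W : Subgroup G)
    (hS' : S' ≤ S) (hSn : (S'.subgroupOf S).Normal) (hTS : T ≤ S)
    (hT' : T' ≤ T) (hTn : (T'.subgroupOf T).Normal)
    (hU : U = S' ⊔ T') (hV : V = S' ⊔ T) (hW : W = (S' ⊓ T) ⊔ T') :
    ∃ (_h1 : (U.subgroupOf V).Normal)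
      (_h2 : (W.subgroupOf T).Normal),
      Nonempty ((↥V ⧸ U.subgroupOf V) ≃* (↥T ⧸ W.subgroupOf T)) := by
  subst hU hV hW
  have hs : ∀ s t : G, s ∈ S' → t ∈ S → t * s * t⁻¹ ∈ S' :=
    fun s t hst htS => (Subgroup.normal_subgroupOf_iff hS').mp hSn s t hst htS
  have ht : ∀ a b : G, a ∈ T' → b ∈ T → b * a * b⁻¹ ∈ T' :=
    fun a b ha hb => (Subgroup.normal_subgroupOf_iff hT').mp hTn a b ha hb
  have hT'S : T' ≤ S := hT'.trans hTS
  have decompT : ∀ x ∈ S' ⊔ T, ∃ s ∈ S', ∃ t ∈ T, x = s * t :=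
    bfly_decomp S' T (fun s t hst htT => hs s t hst (hTS htT))
  have decompT' : ∀ x ∈ S' ⊔ T', ∃ s ∈ S', ∃ t ∈ T', x = s * t :=
    bfly_decomp S' T' (fun s t hst htT => hs s t hst (hT'S htT))
  -- conjugation by elements of T preserves S' ⊔ T'
  have convT : ∀ t ∈ T, ∀ h ∈ S' ⊔ T', t * h * t⁻¹ ∈ S' ⊔ T' := by
    intro t htT h hh
    obtain ⟨s, hsS, u, huT, rfl⟩ := decompT' h hh
    have e : t * (s * u) * t⁻¹ = (t * s * t⁻¹) * (t * u * t⁻¹) := by group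
    rw [e]
    exact mul_mem (Subgroup.mem_sup_left (hs s t hsS (hTS htT)))
      (Subgroup.mem_sup_right (ht u t huT htT))
  -- conjugation by elements of S' preserves S' ⊔ T'
  have convS : ∀ s ∈ S', ∀ h ∈ S' ⊔ T', s * h * s⁻¹ ∈ S' ⊔ T' := by
    intro s hsS h hh
    obtain ⟨s', hs', u, huT, rfl⟩ := decompT' h hh
    have e : s * (s' * u) * s⁻¹ = (s * s' * s⁻¹) * ((s * (u * s⁻¹ * u⁻¹)) * u) := by group
    rw [e]
    refine mul_mem (Subgroup.mem_sup_left (hs s' s hs' (hS' hsS))) (mul_mem ?_ ?_)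
    · exact Subgroup.mem_sup_left (mul_mem hsS (hs s⁻¹ u (inv_mem hsS) (hT'S huT)))
    · exact Subgroup.mem_sup_right huT
  have hsup : S' ⊔ T' ≤ S' ⊔ T := sup_le_sup_left hT' S'
  have h1 : ((S' ⊔ T').subgroupOf (S' ⊔ T)).Normal := by
    rw [Subgroup.normal_subgroupOf_iff hsup]
    intro h k hh hk
    obtain ⟨s, hsS, t, htT, rfl⟩ := decompT k hk
    have e : s * t * h * (s * t)⁻¹ = s * (t * h * t⁻¹) * s⁻¹ := by group
    rw [e]
    exact convS s hsS _ (convT t htT h hh)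
  -- the homomorphism from T to the quotient
  haveI := h1
  set K' : Subgroup ↥(S' ⊔ T) := (S' ⊔ T').subgroupOf (S' ⊔ T) with hK'
  let φ : ↥T →* (↥(S' ⊔ T) ⧸ K') :=
    (QuotientGroup.mk' K').comp (Subgroup.inclusion le_sup_right)
  -- modular law
  have hmod : (S' ⊔ T') ⊓ T = (S' ⊓ T) ⊔ T' := by
    apply le_antisymm
    · rintro x ⟨hx1, hx2⟩
      obtain ⟨s, hsS, u, huT, rfl⟩ := decompT' x hx1
      have hsT : s ∈ T := by
        have : s = s * u * u⁻¹ := by group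
        rw [this]
        exact mul_mem hx2 (inv_mem (hT' huT))
      exact mul_mem (Subgroup.mem_sup_left ⟨hsS, hsT⟩) (Subgroup.mem_sup_right huT)
    · exact le_inf (sup_le (inf_le_left.trans le_sup_left) le_sup_right)
        (sup_le inf_le_right hT')
  have hker : φ.ker = ((S' ⊓ T) ⊔ T').subgroupOf T := by
    ext x
    simp only [φ, MonoidHom.mem_ker, MonoidHom.comp_apply, ← QuotientGroup.mk'_apply,
      QuotientGroup.mk'_apply]
    rw [QuotientGroup.eq_one_iff]
    change (x : G) ∈ S' ⊔ T' ↔ x ∈ ((S' ⊓ T) ⊔ T').subgroupOf T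
    rw [Subgroup.mem_subgroupOf, ← hmod]
    exact ⟨fun h => ⟨h, x.2⟩, fun h => h.1⟩
  have hsurj : Function.Surjective φ := by
    intro q
    obtain ⟨x, rfl⟩ := QuotientGroup.mk_surjective q
    obtain ⟨s, hsS, t, htT, hx⟩ := decompT (x : G) x.2
    refine ⟨⟨t, htT⟩, ?_⟩
    show QuotientGroup.mk (Subgroup.inclusion le_sup_right ⟨t, htT⟩) = QuotientGroup.mk x
    rw [QuotientGroup.eq]
    show ((Subgroup.inclusion (le_sup_right : T ≤ S' ⊔ T) ⟨t, htT⟩ : ↥(S' ⊔ T)) : G)⁻¹ * (x : G)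
      ∈ S' ⊔ T'
    have hcoe : ((Subgroup.inclusion (le_sup_right : T ≤ S' ⊔ T) ⟨t, htT⟩ : ↥(S' ⊔ T)) : G)
      = t := rfl
    rw [hcoe, hx]
    have e : t⁻¹ * (s * t) = t⁻¹ * s * (t⁻¹)⁻¹ := by group
    rw [e]
    exact Subgroup.mem_sup_left (hs s t⁻¹ hsS (inv_mem (hTS htT)))
  have h2 : (((S' ⊓ T) ⊔ T').subgroupOf T).Normal := hker ▸ φ.normal_ker
  refine ⟨h1, h2, ⟨?_⟩⟩
  haveI := h2
  have e := QuotientGroup.quotientKerEquivOfSurjective φ hsurj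
  exact e.symm.trans (QuotientGroup.quotientMulEquivOfEq hker)

end Butterfly

theorem stmt_9 {G : Type*} [Group G] (S S' T T' : Subgroup G)
    (hS : S' ≤ S) (hSn : (S'.subgroupOf S).Normal)
    (hT : T' ≤ T) (hTn : (T'.subgroupOf T).Normal) :
    ∃ (_h1 : ((S' ⊔ S ⊓ T').subgroupOf (S' ⊔ S ⊓ T)).Normal)
      (_h2 : ((S' ⊓ T ⊔ T').subgroupOf (S ⊓ T ⊔ T')).Normal),
      Nonempty ((↥(S' ⊔ S ⊓ T) ⧸ (S' ⊔ S ⊓ T').subgroupOf (S' ⊔ S ⊓ T)) ≃*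
        (↥(S ⊓ T ⊔ T') ⧸ (S' ⊓ T ⊔ T').subgroupOf (S ⊓ T ⊔ T'))) := by
  have hs : ∀ s t : G, s ∈ S' → t ∈ S → t * s * t⁻¹ ∈ S' :=
    fun s t hst htS => (Subgroup.normal_subgroupOf_iff hS).mp hSn s t hst htS
  have ht : ∀ a b : G, a ∈ T' → b ∈ T → b * a * b⁻¹ ∈ T' :=
    fun a b ha hb => (Subgroup.normal_subgroupOf_iff hT).mp hTn a b ha hb
  have l1 : S' ⊓ (S ⊓ T) = S' ⊓ T := by
    rw [← inf_assoc, inf_eq_left.mpr hS]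
  have l2 : T' ⊓ (S ⊓ T) = S ⊓ T' := by
    rw [inf_comm S T, ← inf_assoc, inf_eq_left.mpr hT, inf_comm]
  -- the common middle kernel
  set W0 : Subgroup G := (S' ⊓ T) ⊔ (S ⊓ T') with hW0
  -- left application
  have hST'le : S ⊓ T' ≤ S ⊓ T := inf_le_inf_left S hT
  have hST'n : ((S ⊓ T').subgroupOf (S ⊓ T)).Normal := by
    rw [Subgroup.normal_subgroupOf_iff hST'le]
    intro h k hh hk
    obtain ⟨h1, h2⟩ := Subgroup.mem_inf.mp hh
    obtain ⟨k1, k2⟩ := Subgroup.mem_inf.mp hk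
    exact Subgroup.mem_inf.mpr ⟨mul_mem (mul_mem k1 h1) (inv_mem k1), ht h k h2 k2⟩
  obtain ⟨hL1, _, ⟨e1⟩⟩ :=
    bfly S' (S ⊓ T) (S ⊓ T') S (S' ⊔ S ⊓ T') (S' ⊔ S ⊓ T) W0
      hS hSn inf_le_left hST'le hST'n rfl rfl (by rw [hW0, l1])
  -- right application
  have hS'Tle : S' ⊓ T ≤ S ⊓ T := inf_le_inf_right T hS
  have hS'Tn : ((S' ⊓ T).subgroupOf (S ⊓ T)).Normal := by
    rw [Subgroup.normal_subgroupOf_iff hS'Tle]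
    intro h k hh hk
    obtain ⟨h1, h2⟩ := Subgroup.mem_inf.mp hh
    obtain ⟨k1, k2⟩ := Subgroup.mem_inf.mp hk
    exact Subgroup.mem_inf.mpr ⟨hs h k h1 k1, mul_mem (mul_mem k2 h2) (inv_mem k2)⟩
  obtain ⟨hR1, _, ⟨e2⟩⟩ :=
    bfly T' (S ⊓ T) (S' ⊓ T) T (S' ⊓ T ⊔ T') (S ⊓ T ⊔ T') W0
      hT hTn inf_le_right hS'Tle hS'Tn (sup_comm _ _) (sup_comm _ _)
      (by rw [hW0, l2, sup_comm])
  exact ⟨hL1, hR1, ⟨e1.trans e2.symm⟩⟩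
end

section
/- Let S, S', T, T' be subgroups of a group G with S' ≤ S, S' normal in S, T' ≤ T, and T' normal in T. Then (S' ⊓ T) ⊔ (S ⊓ T') is normal in S ⊓ T, S ⊓ T' is normal in S ⊓ T, and there is an isomorphism of groups (S' ⊔ (S ⊓ T))/(S' ⊔ (S ⊓ T')) ≅ (S ⊓ T)/((S' ⊓ T) ⊔ (S ⊓ T')). -/
open Subgroup

/-- If `B` normalizes `A`, every element of `A ⊔ B` decomposes as a product. -/
lemma sup_decomp_aux {G : Type*} [Group G] (A B : Subgroup G)
    (hA : ∀ b ∈ B, ∀ a ∈ A, b * a * b⁻¹ ∈ A)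
    {g : G} (hg : g ∈ A ⊔ B) : ∃ a ∈ A, ∃ b ∈ B, g = a * b := by
  rw [sup_eq_closure_mul] at hg
  induction hg using closure_induction with
  | mem x hx =>
      obtain ⟨a, ha, b, hb, rfl⟩ := hx
      exact ⟨a, ha, b, hb, rfl⟩
  | one => exact ⟨1, one_mem _, 1, one_mem _, by simp⟩
  | mul x y hx hy ihx ihy =>
      obtain ⟨a, ha, b, hb, rfl⟩ := ihx
      obtain ⟨c, hc, d, hd, rfl⟩ := ihy
      exact ⟨a * (b * c * b⁻¹), mul_mem ha (hA b hb c hc), b * d, mul_mem hb hd, by group⟩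
  | inv x hx ihx =>
      obtain ⟨a, ha, b, hb, rfl⟩ := ihx
      exact ⟨b⁻¹ * a⁻¹ * b⁻¹⁻¹, hA b⁻¹ (inv_mem hb) a⁻¹ (inv_mem ha), b⁻¹, inv_mem hb,
        by group⟩

theorem stmt_10 {G : Type*} [Group G] (S S' T T' : Subgroup G)
    (hS : S' ≤ S) (hSn : (S'.subgroupOf S).Normal)
    (hT : T' ≤ T) (hTn : (T'.subgroupOf T).Normal) :
    ∃ (_h1 : ((S' ⊓ T ⊔ S ⊓ T').subgroupOf (S ⊓ T)).Normal)
      (_h2 : ((S ⊓ T').subgroupOf (S ⊓ T)).Normal)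
      (_h3 : ((S' ⊔ S ⊓ T').subgroupOf (S' ⊔ S ⊓ T)).Normal),
      Nonempty ((↥(S' ⊔ S ⊓ T) ⧸ (S' ⊔ S ⊓ T').subgroupOf (S' ⊔ S ⊓ T)) ≃*
        (↥(S ⊓ T) ⧸ (S' ⊓ T ⊔ S ⊓ T').subgroupOf (S ⊓ T))) := by
  haveI := hSn
  haveI := hTn
  -- conjugation facts
  have hS'conj : ∀ k ∈ S, ∀ h ∈ S', k * h * k⁻¹ ∈ S' :=
    fun k hk h hh => (normal_subgroupOf_iff hS).mp hSn h k hh hk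
  have hST'T : S ⊓ T' ≤ S ⊓ T := inf_le_inf le_rfl hT
  have hS'TT : S' ⊓ T ≤ S ⊓ T := inf_le_inf hS le_rfl
  have hST'n : ((S ⊓ T').subgroupOf (S ⊓ T)).Normal :=
    inf_subgroupOf_inf_normal_of_right S T' T
  haveI hS'Tn : ((S' ⊓ T).subgroupOf (S ⊓ T)).Normal :=
    inf_subgroupOf_inf_normal_of_left T
  have h1 : ((S' ⊓ T ⊔ S ⊓ T').subgroupOf (S ⊓ T)).Normal := by
    rw [subgroupOf_sup hS'TT hST'T]
    haveI := hST'n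
    exact sup_normal _ _
  -- decomposition of elements of D = S' ⊔ S ⊓ T'
  have hnormz : ∀ b ∈ S ⊓ T', ∀ a ∈ S', b * a * b⁻¹ ∈ S' :=
    fun b hb a ha => hS'conj b hb.1 a ha
  have hdec : ∀ g ∈ S' ⊔ S ⊓ T', ∃ a ∈ S', ∃ b ∈ S ⊓ T', g = a * b :=
    fun g hg => sup_decomp_aux _ _ hnormz hg
  -- key conjugation property for D
  have hxconj : ∀ x, (x ∈ S' ∨ x ∈ S ⊓ T) → ∀ h ∈ S' ⊔ S ⊓ T',
      x * h * x⁻¹ ∈ S' ⊔ S ⊓ T' := by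
    intro x hx h hh
    obtain ⟨a, ha, b, hb, rfl⟩ := hdec h hh
    have hxS : x ∈ S := hx.elim (fun h => hS h) fun h => h.1
    have hax : x * a * x⁻¹ ∈ S' := hS'conj x hxS a ha
    have heq : x * (a * b) * x⁻¹ = (x * a * x⁻¹) * (x * b * x⁻¹) := by group
    rw [heq]
    refine mul_mem (le_sup_left (α := Subgroup G) hax) ?_
    rcases hx with hx | hx
    · have h2 : b * x⁻¹ * b⁻¹ ∈ S' := hS'conj b hb.1 x⁻¹ (inv_mem hx)
      have heq2 : x * b * x⁻¹ = (x * (b * x⁻¹ * b⁻¹)) * b := by group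
      rw [heq2]
      exact mul_mem (le_sup_left (α := Subgroup G) (mul_mem hx h2))
        (le_sup_right (α := Subgroup G) hb)
    · exact le_sup_right (α := Subgroup G)
        ((normal_subgroupOf_iff hST'T).mp hST'n b x hb hx)
  have hnorm : S' ⊔ S ⊓ T ≤ normalizer ((S' ⊔ S ⊓ T' : Subgroup G) : Set G) := by
    have haux : ∀ x, (x ∈ S' ∨ x ∈ S ⊓ T) → (x⁻¹ ∈ S' ∨ x⁻¹ ∈ S ⊓ T) →
        x ∈ normalizer ((S' ⊔ S ⊓ T' : Subgroup G) : Set G) := by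
      intro x hx hxi
      rw [mem_normalizer_iff]
      intro h
      constructor
      · exact fun hh => hxconj x hx h hh
      · intro hh
        have := hxconj x⁻¹ hxi _ hh
        have heq : x⁻¹ * (x * h * x⁻¹) * x⁻¹⁻¹ = h := by group
        rwa [heq] at this
    refine sup_le (fun x hx => haux x (Or.inl hx) (Or.inl (inv_mem hx)))
      (fun x hx => haux x (Or.inr hx) (Or.inr (inv_mem hx)))
  have hDP : S' ⊔ S ⊓ T' ≤ S' ⊔ S ⊓ T := sup_le le_sup_left (hST'T.trans le_sup_right)
  have hCP : S ⊓ T ≤ S' ⊔ S ⊓ T := le_sup_right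
  have h3 : ((S' ⊔ S ⊓ T').subgroupOf (S' ⊔ S ⊓ T)).Normal := by
    rw [normal_subgroupOf_iff hDP]
    exact fun h k hh hk => (mem_normalizer_iff.mp (hnorm hk) h).mp hh
  -- the modular-law identity
  have hkey : (S ⊓ T) ⊓ (S' ⊔ S ⊓ T') = S' ⊓ T ⊔ S ⊓ T' := by
    apply le_antisymm
    · rintro g ⟨hgC, hgD⟩
      obtain ⟨a, ha, b, hb, rfl⟩ := hdec _ hgD
      have hbT : b ∈ T := hT hb.2
      have haT : a ∈ T := by
        have heq : a = (a * b) * b⁻¹ := by group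
        rw [heq]; exact mul_mem hgC.2 (inv_mem hbT)
      exact mul_mem (le_sup_left (α := Subgroup G) ⟨ha, haT⟩)
        (le_sup_right (α := Subgroup G) hb)
    · exact le_inf (sup_le hS'TT hST'T)
        (sup_le (inf_le_left.trans le_sup_left) le_sup_right)
  have hPsup : (S ⊓ T) ⊔ (S' ⊔ S ⊓ T') = S' ⊔ S ⊓ T :=
    le_antisymm (sup_le hCP hDP) (sup_le (le_sup_left.trans le_sup_right) le_sup_left)
  refine ⟨h1, hST'n, h3, ?_⟩
  haveI := h3
  haveI := h1
  -- second isomorphism theorem inside P := S' ⊔ S ⊓ T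
  let e1 := QuotientGroup.quotientInfEquivProdNormalQuotient
      ((S ⊓ T).subgroupOf (S' ⊔ S ⊓ T)) ((S' ⊔ S ⊓ T').subgroupOf (S' ⊔ S ⊓ T))
  have hsup' : (S ⊓ T).subgroupOf (S' ⊔ S ⊓ T) ⊔ (S' ⊔ S ⊓ T').subgroupOf (S' ⊔ S ⊓ T)
      = (S' ⊔ S ⊓ T).subgroupOf (S' ⊔ S ⊓ T) := by
    rw [← subgroupOf_sup hCP hDP, hPsup]
  let e2 := QuotientGroup.equivQuotientSubgroupOfOfEq
      (A' := (S' ⊔ S ⊓ T').subgroupOf (S' ⊔ S ⊓ T)) rfl hsup'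
  have hmap3 : (((S' ⊔ S ⊓ T').subgroupOf (S' ⊔ S ⊓ T)).subgroupOf
        ((S' ⊔ S ⊓ T).subgroupOf (S' ⊔ S ⊓ T))).map
      (subgroupOfEquivOfLe (le_refl (S' ⊔ S ⊓ T)) : _ ≃* _).toMonoidHom
      = (S' ⊔ S ⊓ T').subgroupOf (S' ⊔ S ⊓ T) := by
    ext x
    simp [Subgroup.mem_map, Subgroup.mem_subgroupOf, subgroupOfEquivOfLe]
  let e3 := QuotientGroup.congr _ _ (subgroupOfEquivOfLe (le_refl (S' ⊔ S ⊓ T))) hmap3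
  have hmap4 : ((((S' ⊔ S ⊓ T').subgroupOf (S' ⊔ S ⊓ T)).subgroupOf
        ((S ⊓ T).subgroupOf (S' ⊔ S ⊓ T))).map
      (subgroupOfEquivOfLe hCP : _ ≃* _).toMonoidHom)
      = (S' ⊓ T ⊔ S ⊓ T').subgroupOf (S ⊓ T) := by
    ext x
    simp only [Subgroup.mem_map, Subgroup.mem_subgroupOf]
    constructor
    · rintro ⟨y, hy, rfl⟩
      rw [← hkey]
      exact ⟨y.2, hy⟩
    · intro hx
      rw [← hkey] at hx
      refine ⟨⟨⟨(x : G), hCP x.2⟩, x.2⟩, hx.2, rfl⟩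
  let e4 := QuotientGroup.congr _ _ (subgroupOfEquivOfLe hCP) hmap4
  exact ⟨((e1.trans (e2.trans e3)).symm).trans e4⟩
end
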